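/- Let L be an integral ℓ-monoid, let α be a fuzzy regular expression over a finite alphabet X with associated alphabet Y, let A = (A, X∪Y, δ^A, a₀, τ^A) be an arbitrary nondeterministic finite automaton recognizing ‖α_R‖, and let A_α be the fuzzy automaton associated with A and α. Then for every nonempty word u ∈ X⁺ and all a, b ∈ A, the set {φ*_α(v)⊗δ^A(a,v,b) : v ∈ U_Y(u)} has a least upper bound in L, and δ^{A_α}(a, u, b) = ⋁_{v∈U_Y(u)} φ*_α(v)⊗δ^A(a,v,b), where δ^{A_α} on the left is the extension of the fuzzy transition relation of A_α to words. -/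

import Mathlib

attribute [local instance] Classical.propDecidable

/-- A lattice-ordered monoid (ℓ-monoid): a lattice with least element `⊥` and greatest
element `⊤`, together with a monoid structure (multiplication `*`, unit `1`, playing the
role of `e`) such that `⊥` (playing the role of the scalar `0`) is absorbing and
multiplication distributes over binary joins on both sides. -/
class LMonoid (L : Type*) extends Lattice L, BoundedOrder L, Monoid L where
  mul_bot : ∀ x : L, x * ⊥ = ⊥
  bot_mul : ∀ x : L, ⊥ * x = ⊥
  mul_sup : ∀ x y z : L, x * (y ⊔ z) = x * y ⊔ x * z
  sup_mul : ∀ x y z : L, (x ⊔ y) * z = x * z ⊔ y * z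

/-- An integral ℓ-monoid: the unit of the multiplication is the top element of the lattice. -/
class IntegralLMonoid (L : Type*) extends LMonoid L where
  one_eq_top : (1 : L) = ⊤

/-- Fuzzy regular expressions over an alphabet `X` with scalars in `L`. -/
inductive FRE (X L : Type*) where
  | zero : FRE X L
  | eps : FRE X L
  | char : X → FRE X L
  | smul : L → FRE X L → FRE X L
  | plus : FRE X L → FRE X L → FRE X L
  | comp : FRE X L → FRE X L → FRE X L
  | star : FRE X L → FRE X L

/-- The set of scalars of `L` occurring in a fuzzy regular expression. -/
def FRE.scalars {X L : Type*} : FRE X L → Set L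
  | .zero => ∅
  | .eps => ∅
  | .char _ => ∅
  | .smul lam β => insert lam β.scalars
  | .plus β γ => β.scalars ∪ γ.scalars
  | .comp β γ => β.scalars ∪ γ.scalars
  | .star β => β.scalars

noncomputable section

namespace Fz

variable {L : Type*} [IntegralLMonoid L]

/-- Composition of fuzzy relations: `(R ∘ S)(a,b) = ⋁_{c} R(a,c) ⊗ S(c,b)`. -/
def fcomp {A : Type*} [Fintype A] (R S : A → A → L) : A → A → L :=
  fun a b => Finset.univ.sup fun c => R a c * S c b

/-- Composition of a fuzzy relation with a fuzzy set: `(R ∘ f)(a) = ⋁_{b} R(a,b) ⊗ f(b)`. -/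
def fcompf {A : Type*} [Fintype A] (R : A → A → L) (f : A → L) : A → L :=
  fun a => Finset.univ.sup fun b => R a b * f b

/-- Composition of a fuzzy set with a fuzzy relation: `(f ∘ R)(a) = ⋁_{b} f(b) ⊗ R(b,a)`. -/
def fcompfR {A : Type*} [Fintype A] (f : A → L) (R : A → A → L) : A → L :=
  fun a => Finset.univ.sup fun b => f b * R b a

/-- Powers of a fuzzy relation: `R⁰` is the crisp equality and `R^{k+1} = R^k ∘ R`. -/
def rpow {A : Type*} [Fintype A] (R : A → A → L) : ℕ → A → A → L
  | 0 => fun a b => if a = b then 1 else ⊥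
  | k + 1 => fcomp (rpow R k) R

private def dstarAux {A Z : Type*} [Fintype A] (δ : A → Z → A → L) : A → List Z → A → L
  | a, [], b => if a = b then 1 else ⊥
  | a, z :: w, b => Finset.univ.sup fun c => dstarAux δ a w c * δ c z b

/-- The extension of a fuzzy transition relation to words:
`δ(a, ε, b) = 1` if `a = b` and `⊥` otherwise, and
`δ(a, ux, b) = ⋁_{c} δ(a, u, c) ⊗ δ(c, x, b)`. -/
def dstar {A Z : Type*} [Fintype A] (δ : A → Z → A → L) (a : A) (w : List Z) (b : A) : L :=
  dstarAux δ a w.reverse b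

/-- Fuzzy language recognized by a fuzzy automaton with a single crisp initial state `a0`:
`L(A)(u) = ⋁_{b} δ(a0, u, b) ⊗ τ(b)`. -/
def lang {A Z : Type*} [Fintype A] (δ : A → Z → A → L) (a0 : A) (τ : A → L)
    (w : List Z) : L :=
  Finset.univ.sup fun b => dstar δ a0 w b * τ b

/-- Concatenation of fuzzy languages: `(fg)(u) = ⋁_{u = vw} f(v) ⊗ g(w)`
(a finite join over the factorizations of `u`). -/
def fconcat {X : Type*} (f g : List X → L) : List X → L :=
  fun u => (Finset.range (u.length + 1)).sup fun i => f (u.take i) * g (u.drop i)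

/-- Powers of a fuzzy language: `f⁰` is the characteristic function of the empty word,
and `f^{n+1} = fⁿ f`. -/
def fpow {X : Type*} (f : List X → L) : ℕ → List X → L
  | 0 => fun u => if u = [] then 1 else ⊥
  | n + 1 => fconcat (fpow f n) f

/-- `IsNorm α f` asserts that `f` is the fuzzy language `‖α‖` represented by the fuzzy
regular expression `α` (for the star, `‖β*‖(u)` is the least upper bound of the powers,
which is required to exist). -/
inductive IsNorm {X : Type*} : FRE X L → (List X → L) → Prop
  | zero : IsNorm .zero fun _ => ⊥
  | eps : IsNorm .eps fun u => if u = [] then 1 else ⊥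
  | char (x : X) : IsNorm (.char x) fun u => if u = [x] then 1 else ⊥
  | smul (lam : L) {β : FRE X L} {f : List X → L} :
      IsNorm β f → IsNorm (.smul lam β) fun u => lam * f u
  | plus {β γ : FRE X L} {f g : List X → L} :
      IsNorm β f → IsNorm γ g → IsNorm (.plus β γ) fun u => f u ⊔ g u
  | comp {β γ : FRE X L} {f g : List X → L} :
      IsNorm β f → IsNorm γ g → IsNorm (.comp β γ) (fconcat f g)
  | star {β : FRE X L} {f g : List X → L} :
      IsNorm β f → (∀ u, IsLUB {l | ∃ n : ℕ, l = fpow f n u} (g u)) →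
      IsNorm (.star β) g

/-- The ordinary regular expression `α_R` over `X ∪ Y` obtained from a fuzzy regular
expression `α` by replacing each scalar `λ` by the associated letter `λ' = sc λ ∈ Y`. -/
def toReg {X Y : Type*} (sc : L → Y) : FRE X L → RegularExpression (X ⊕ Y)
  | .zero => 0
  | .eps => 1
  | .char x => RegularExpression.char (Sum.inl x)
  | .smul lam β => RegularExpression.char (Sum.inr (sc lam)) * toReg sc β
  | .plus β γ => toReg sc β + toReg sc γ
  | .comp β γ => toReg sc β * toReg sc γ
  | .star β => (toReg sc β).star

/-- `U_Y(u)`: the set of words over `X ∪ Y` from which deleting all letters of `Y`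
yields `u` (the shuffle of `u` with `Y*`). -/
def UY {X : Type*} (Y : Type*) (u : List X) : Set (List (X ⊕ Y)) :=
  {v | v.filterMap (fun z => z.getLeft?) = u}

/-- The homomorphism `φ*_α : (X ∪ Y)* → (L, ⊗, 1)` determined by mapping every letter of
`X` to `1` and every letter `λ' ∈ Y` to the corresponding scalar `λ = φY λ'`. -/
def phiStar {X Y : Type*} (φY : Y → L) (v : List (X ⊕ Y)) : L :=
  (v.map (Sum.elim (fun _ => (1 : L)) φY)).prod

/-- The language `‖α_R‖` of the regular expression `α_R`, viewed as a fuzzy language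
with membership values in `{0, 1} ⊆ L`. -/
def langR {X Y : Type*} (sc : L → Y) (α : FRE X L) (v : List (X ⊕ Y)) : L :=
  if v ∈ (toReg sc α).matches' then 1 else ⊥

/-- The reflexive fuzzy relation `R` on the state set of a nondeterministic automaton over
`X ∪ Y`: `R(a,a) = 1` and, for `a ≠ b`, `R(a,b) = ⋁_{λ' ∈ Y} λ ⊗ δ(a, λ', b)`. -/
def Rstep {X Y A : Type*} [Fintype A] [Fintype Y] (φY : Y → L)
    (δ : A → X ⊕ Y → A → L) : A → A → L :=
  fun a b => if a = b then 1 else Finset.univ.sup fun y : Y => φY y * δ a (Sum.inr y) b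

/-- The fuzzy relation `R_A = Rⁿ`, `n = |A|`: the least transitive fuzzy relation
containing `R`. -/
def RA {X Y A : Type*} [Fintype A] [Fintype Y] (φY : Y → L)
    (δ : A → X ⊕ Y → A → L) : A → A → L :=
  rpow (Rstep φY δ) (Fintype.card A)

/-- The set `{φ*_α(v) ⊗ δ^A(a,v,b) : v ∈ U_Y(x)}` whose least upper bound defines the
transition `δ^{A_α}(a, x, b)` of the fuzzy automaton associated with `A` and `α`. -/
def dset {X Y A : Type*} [Fintype A] (φY : Y → L) (δ : A → X ⊕ Y → A → L)
    (a : A) (x : X) (b : A) : Set L :=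
  {l | ∃ v ∈ UY Y [x], l = phiStar φY v * dstar δ a v b}

/-- The set `{⋁_{b} φ*_α(v) ⊗ δ^A(a,v,b) ⊗ τ(b) : v ∈ Y*}` whose least upper bound defines
the terminal degree `τ^{A_α}(a)` of the fuzzy automaton associated with `A` and `α`. -/
def tset {X Y A : Type*} [Fintype A] (φY : Y → L) (δ : A → X ⊕ Y → A → L)
    (τ : A → L) (a : A) : Set L :=
  {l | ∃ w : List Y, l = Finset.univ.sup fun b =>
    phiStar φY ((w.map Sum.inr : List (X ⊕ Y))) *
      dstar δ a (w.map Sum.inr) b * τ b}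

end Fz

end


section Aux
open Fz

variable {L : Type*} [IntegralLMonoid L]

lemma lm_le_one (x : L) : x ≤ 1 := by
  rw [IntegralLMonoid.one_eq_top]; exact le_top

lemma lm_mul_bot (x : L) : x * ⊥ = ⊥ := LMonoid.mul_bot x
lemma lm_bot_mul (x : L) : ⊥ * x = ⊥ := LMonoid.bot_mul x
lemma lm_mul_sup (x y z : L) : x * (y ⊔ z) = x * y ⊔ x * z := LMonoid.mul_sup x y z
lemma lm_sup_mul (x y z : L) : (x ⊔ y) * z = x * z ⊔ y * z := LMonoid.sup_mul x y z

lemma lm_mul_le_mul {a b c d : L} (h1 : a ≤ b) (h2 : c ≤ d) : a * c ≤ b * d := by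
  have h3 : a * c ≤ b * c := by
    have h := lm_sup_mul a b c
    rw [sup_eq_right.mpr h1] at h
    rw [h]; exact le_sup_left
  have h4 : b * c ≤ b * d := by
    have h := lm_mul_sup b c d
    rw [sup_eq_right.mpr h2] at h
    rw [h]; exact le_sup_left
  exact h3.trans h4

lemma lm_finsetSup_mul {ι : Type*} (F : Finset ι) (f : ι → L) (x : L) :
    F.sup f * x = F.sup fun i => f i * x := by
  classical
  induction F using Finset.induction with
  | empty => simp [lm_bot_mul]
  | insert _ _ h ih => rw [Finset.sup_insert, Finset.sup_insert, lm_sup_mul, ih]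

lemma lm_mul_finsetSup {ι : Type*} (F : Finset ι) (f : ι → L) (x : L) :
    x * F.sup f = F.sup fun i => x * f i := by
  classical
  induction F using Finset.induction with
  | empty => simp [lm_mul_bot]
  | insert _ _ h ih => rw [Finset.sup_insert, Finset.sup_insert, lm_mul_sup, ih]

/-- An element of `L` is crisp if it is `1` or `⊥`. -/
def Crisp (x : L) : Prop := x = 1 ∨ x = ⊥

lemma Crisp.mul {x y : L} (hx : Crisp x) (hy : Crisp y) : Crisp (x * y) := by
  rcases hx with hx | hx <;> rcases hy with hy | hy <;> subst hx <;> subst hy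
  · left; rw [one_mul]
  · right; rw [lm_mul_bot]
  · right; rw [lm_bot_mul]
  · right; rw [lm_bot_mul]

lemma Crisp.sup {x y : L} (hx : Crisp x) (hy : Crisp y) : Crisp (x ⊔ y) := by
  rcases hx with hx | hx <;> rcases hy with hy | hy <;> subst hx <;> subst hy
  · left; rw [sup_idem]
  · left; rw [sup_bot_eq]
  · left; rw [bot_sup_eq]
  · right; rw [sup_idem]

lemma crisp_finsetSup {ι : Type*} {F : Finset ι} {f : ι → L}
    (h : ∀ i ∈ F, Crisp (f i)) : Crisp (F.sup f) :=
  Finset.sup_induction (Or.inr rfl) (fun _ h1 _ h2 => h1.sup h2) h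

lemma crisp_mul_eq_one {x y : L} (hx : Crisp x) (hy : Crisp y) (h : x * y = 1) :
    x = 1 ∧ y = 1 := by
  have hb : x = ⊥ → (⊥ : L) = 1 := fun e => by rw [e, lm_bot_mul] at h; exact h
  have hb' : y = ⊥ → (⊥ : L) = 1 := fun e => by rw [e, lm_mul_bot] at h; exact h
  constructor
  · rcases hx with h1 | h1
    · exact h1
    · rw [h1]; exact hb h1
  · rcases hy with h1 | h1
    · exact h1
    · rw [h1]; exact hb' h1

lemma crisp_sup_eq_one {ι : Type*} {F : Finset ι} {f : ι → L} (hne : F.Nonempty)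
    (hc : ∀ i ∈ F, Crisp (f i)) (h : F.sup f = 1) : ∃ i ∈ F, f i = 1 := by
  by_cases hex : ∃ i ∈ F, f i = 1
  · exact hex
  · push_neg at hex
    have hall : ∀ i ∈ F, f i = ⊥ := fun i hi => (hc i hi).resolve_left (hex i hi)
    have hle : F.sup f ≤ ⊥ := Finset.sup_le fun i hi => (hall i hi).le
    have h1 : (1 : L) = ⊥ := by rw [← h]; exact le_bot_iff.mp hle
    obtain ⟨i, hi⟩ := hne
    exact ⟨i, hi, (hall i hi).trans h1.symm⟩

section Dstar

variable {A Z : Type*} [Fintype A]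

lemma dstar_nil (δ : A → Z → A → L) (a b : A) :
    dstar δ a [] b = if a = b then 1 else ⊥ := rfl

lemma dstar_snoc (δ : A → Z → A → L) (a b : A) (v : List Z) (z : Z) :
    dstar δ a (v ++ [z]) b = Finset.univ.sup fun c => dstar δ a v c * δ c z b := by
  simp [Fz.dstar, Fz.dstarAux, List.reverse_append]

lemma sup_ite_left (a : A) (g : A → L) :
    (Finset.univ.sup fun c => (if a = c then (1 : L) else ⊥) * g c) = g a := by
  apply le_antisymm
  · apply Finset.sup_le; intro c _
    by_cases h : a = c
    · subst h; rw [if_pos rfl, one_mul]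
    · rw [if_neg h, lm_bot_mul]; exact bot_le
  · have h := Finset.le_sup (f := fun c => (if a = c then (1 : L) else ⊥) * g c)
      (Finset.mem_univ a)
    simpa using h

lemma sup_ite_right (b : A) (g : A → L) :
    (Finset.univ.sup fun c => g c * (if c = b then (1 : L) else ⊥)) = g b := by
  apply le_antisymm
  · apply Finset.sup_le; intro c _
    by_cases h : c = b
    · subst h; rw [if_pos rfl, mul_one]
    · rw [if_neg h, lm_mul_bot]; exact bot_le
  · have h := Finset.le_sup (f := fun c => g c * (if c = b then (1 : L) else ⊥))
      (Finset.mem_univ b)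
    simpa using h

lemma dstar_single (δ : A → Z → A → L) (a b : A) (z : Z) :
    dstar δ a [z] b = δ a z b := by
  have h : ([z] : List Z) = [] ++ [z] := rfl
  rw [h, dstar_snoc]
  simp_rw [dstar_nil]
  exact sup_ite_left a fun c => δ c z b

lemma dstar_append (δ : A → Z → A → L) (a b : A) (v w : List Z) :
    dstar δ a (v ++ w) b = Finset.univ.sup fun c => dstar δ a v c * dstar δ c w b := by
  induction w using List.reverseRecOn generalizing b with
  | nil =>
    rw [List.append_nil]
    simp_rw [dstar_nil]
    exact (sup_ite_right b fun c => dstar δ a v c).symm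
  | append_singleton w z ih =>
    rw [← List.append_assoc, dstar_snoc]
    calc (Finset.univ.sup fun c => dstar δ a (v ++ w) c * δ c z b)
        = Finset.univ.sup fun c =>
            (Finset.univ.sup fun d => dstar δ a v d * dstar δ d w c) * δ c z b := by
          simp_rw [ih]
      _ = Finset.univ.sup fun c => Finset.univ.sup fun d =>
            dstar δ a v d * dstar δ d w c * δ c z b := by
          simp_rw [lm_finsetSup_mul]
      _ = Finset.univ.sup fun d => Finset.univ.sup fun c =>
            dstar δ a v d * (dstar δ d w c * δ c z b) := by
          rw [Finset.sup_comm]; simp_rw [mul_assoc]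
      _ = Finset.univ.sup fun d => dstar δ a v d *
            Finset.univ.sup fun c => dstar δ d w c * δ c z b := by
          simp_rw [lm_mul_finsetSup]
      _ = Finset.univ.sup fun d => dstar δ a v d * dstar δ d (w ++ [z]) b := by
          simp_rw [dstar_snoc]

lemma crisp_dstar {δ : A → Z → A → L} (hδ : ∀ a z b, Crisp (δ a z b)) (a b : A)
    (v : List Z) : Crisp (dstar δ a v b) := by
  induction v using List.reverseRecOn generalizing b with
  | nil =>
    rw [dstar_nil]
    split
    · left; rfl
    · right; rfl
  | append_singleton w z ih =>
    rw [dstar_snoc]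
    exact crisp_finsetSup fun c _ => (ih c).mul (hδ c z b)

lemma dstar_split {δ : A → Z → A → L} (hδ : ∀ a z b, Crisp (δ a z b))
    {a b : A} {v w : List Z} (h : dstar δ a (v ++ w) b = 1) :
    ∃ c, dstar δ a v c = 1 ∧ dstar δ c w b = 1 := by
  rw [dstar_append] at h
  obtain ⟨c, _, hc⟩ := crisp_sup_eq_one ⟨a, Finset.mem_univ a⟩
    (fun c _ => (crisp_dstar hδ a c v).mul (crisp_dstar hδ c b w)) h
  obtain ⟨h1, h2⟩ := crisp_mul_eq_one (crisp_dstar hδ a c v) (crisp_dstar hδ c b w) hc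
  exact ⟨c, h1, h2⟩

end Dstar

section Phi

variable {X Y : Type*} (φY : Y → L)

lemma phiStar_append (v w : List (X ⊕ Y)) :
    phiStar φY (v ++ w) = phiStar φY v * phiStar φY w := by
  simp [Fz.phiStar]

lemma phiStar_map_inr (y : List Y) :
    phiStar (X := X) φY (y.map Sum.inr) = (y.map φY).prod := by
  simp [Fz.phiStar, List.map_map, Function.comp_def]

lemma phiStar_decomp (x : X) (y1 y2 : List Y) :
    phiStar φY (y1.map Sum.inr ++ Sum.inl x :: y2.map Sum.inr) =
      (y1.map φY).prod * (y2.map φY).prod := by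
  have h : (Sum.inl x :: y2.map Sum.inr : List (X ⊕ Y)) =
      [Sum.inl x] ++ y2.map Sum.inr := rfl
  rw [h, phiStar_append, phiStar_append, phiStar_map_inr, phiStar_map_inr]
  have h1 : phiStar (Y := Y) φY [Sum.inl x] = 1 := by simp [Fz.phiStar]
  rw [h1, one_mul]

end Phi

section UYLemmas

variable {X Y : Type*}

lemma filterMap_cons_inl (x : X) (l : List (X ⊕ Y)) :
    (Sum.inl x :: l).filterMap (fun z => z.getLeft?) =
      x :: l.filterMap (fun z => z.getLeft?) := by
  simp [List.filterMap_cons]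

lemma filterMap_cons_inr (y : Y) (l : List (X ⊕ Y)) :
    ((Sum.inr y : X ⊕ Y) :: l).filterMap (fun z => z.getLeft?) =
      l.filterMap (fun z => z.getLeft?) := by
  simp [List.filterMap_cons]

lemma filterMap_getLeft?_map_inr (y : List Y) :
    (y.map (Sum.inr : Y → X ⊕ Y)).filterMap (fun z => z.getLeft?) = [] := by
  induction y with
  | nil => rfl
  | cons z rest ih => rw [List.map_cons, filterMap_cons_inr, ih]

lemma mem_UY_map_inr (y : List Y) :
    (y.map (Sum.inr : Y → X ⊕ Y)) ∈ UY Y ([] : List X) :=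
  filterMap_getLeft?_map_inr y

lemma UY_append {u1 u2 : List X} {v1 v2 : List (X ⊕ Y)}
    (h1 : v1 ∈ UY Y u1) (h2 : v2 ∈ UY Y u2) : v1 ++ v2 ∈ UY Y (u1 ++ u2) := by
  simp only [UY, Set.mem_setOf_eq, List.filterMap_append] at *
  rw [h1, h2]

lemma UY_nil_struct : ∀ {v : List (X ⊕ Y)}, v ∈ UY Y ([] : List X) →
    ∃ ys : List Y, v = ys.map Sum.inr := by
  intro v
  induction v with
  | nil => intro _; exact ⟨[], rfl⟩
  | cons z rest ih =>
    intro h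
    cases z with
    | inl x =>
      have h' : (Sum.inl x :: rest : List (X ⊕ Y)).filterMap (fun z => z.getLeft?)
          = [] := h
      rw [filterMap_cons_inl] at h'
      exact absurd h' (List.cons_ne_nil _ _)
    | inr y =>
      have h' : rest ∈ UY Y ([] : List X) := by
        have hh : (Sum.inr y :: rest : List (X ⊕ Y)).filterMap (fun z => z.getLeft?)
            = [] := h
        rw [filterMap_cons_inr] at hh
        exact hh
      obtain ⟨ys, rfl⟩ := ih h'
      exact ⟨y :: ys, rfl⟩

lemma UY_single_struct {x : X} : ∀ {v : List (X ⊕ Y)}, v ∈ UY Y [x] →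
    ∃ y1 y2 : List Y, v = y1.map Sum.inr ++ Sum.inl x :: y2.map Sum.inr := by
  intro v
  induction v with
  | nil => intro h; simp [UY] at h
  | cons z rest ih =>
    intro h
    cases z with
    | inl x' =>
      have h' : (Sum.inl x' :: rest : List (X ⊕ Y)).filterMap (fun z => z.getLeft?)
          = [x] := h
      rw [filterMap_cons_inl, List.cons.injEq] at h'
      obtain ⟨rfl, hrest⟩ := h'
      obtain ⟨y2, rfl⟩ := UY_nil_struct (hrest : rest ∈ UY Y ([] : List X))
      exact ⟨[], y2, rfl⟩
    | inr y =>
      have h' : rest ∈ UY Y [x] := by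
        have hh : (Sum.inr y :: rest : List (X ⊕ Y)).filterMap (fun z => z.getLeft?)
            = [x] := h
        rw [filterMap_cons_inr] at hh
        exact hh
      obtain ⟨y1, y2, rfl⟩ := ih h'
      exact ⟨y :: y1, y2, rfl⟩

lemma UY_single_mem (x : X) (y1 y2 : List Y) :
    (y1.map Sum.inr ++ Sum.inl x :: y2.map Sum.inr : List (X ⊕ Y)) ∈ UY Y [x] := by
  show List.filterMap _ _ = _
  rw [List.filterMap_append, filterMap_getLeft?_map_inr, filterMap_cons_inl,
    filterMap_getLeft?_map_inr]
  rfl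

lemma UY_cons_decomp {x : X} {u : List X} : ∀ {v : List (X ⊕ Y)},
    v ∈ UY Y (x :: u) →
    ∃ v1 v2, v = v1 ++ v2 ∧ v1 ∈ UY Y [x] ∧ v2 ∈ UY Y u := by
  intro v
  induction v with
  | nil => intro h; simp [UY] at h
  | cons z rest ih =>
    intro h
    cases z with
    | inl x' =>
      have h' : (Sum.inl x' :: rest : List (X ⊕ Y)).filterMap (fun z => z.getLeft?)
          = x :: u := h
      rw [filterMap_cons_inl, List.cons.injEq] at h'
      obtain ⟨rfl, hrest⟩ := h'
      refine ⟨[Sum.inl x'], rest, rfl, ?_, hrest⟩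
      show List.filterMap _ _ = _
      rw [filterMap_cons_inl]
      rfl
    | inr y =>
      have h' : rest ∈ UY Y (x :: u) := by
        have hh : (Sum.inr y :: rest : List (X ⊕ Y)).filterMap (fun z => z.getLeft?)
            = x :: u := h
        rw [filterMap_cons_inr] at hh
        exact hh
      obtain ⟨v1, v2, rfl, h1, h2⟩ := ih h'
      refine ⟨Sum.inr y :: v1, v2, rfl, ?_, h2⟩
      show List.filterMap _ _ = _
      rw [filterMap_cons_inr]
      exact h1

end UYLemmas

/-- Dominated-sup closure: elements obtained from elements dominated by members of `S`
by finitely many binary joins (and `⊥`).  Any such element is below every upper bound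
of `S`. -/
inductive DomSup (S : Set L) : L → Prop
  | bot : DomSup S ⊥
  | of {t s : L} : s ∈ S → t ≤ s → DomSup S t
  | sup {x y : L} : DomSup S x → DomSup S y → DomSup S (x ⊔ y)

lemma DomSup.le_ub {S : Set L} {x M : L} (h : DomSup S x) (hM : M ∈ upperBounds S) :
    x ≤ M := by
  induction h with
  | bot => exact bot_le
  | of hs hle => exact hle.trans (hM hs)
  | sup _ _ ih1 ih2 => exact sup_le ih1 ih2

lemma isLUB_of_domSup {S : Set L} {e : L} (h1 : e ∈ upperBounds S) (h2 : DomSup S e) :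
    IsLUB S e :=
  ⟨h1, fun _ hM => h2.le_ub hM⟩

lemma DomSup.finsetSup {S : Set L} {ι : Type*} {F : Finset ι} {f : ι → L}
    (h : ∀ i ∈ F, DomSup S (f i)) : DomSup S (F.sup f) :=
  Finset.sup_induction DomSup.bot (fun _ h1 _ h2 => h1.sup h2) h

lemma DomSup.mul {S1 S2 S : Set L} {p q : L} (h1 : DomSup S1 p) (h2 : DomSup S2 q)
    (hS : ∀ s1 ∈ S1, ∀ s2 ∈ S2, ∃ s ∈ S, s1 * s2 ≤ s) : DomSup S (p * q) := by
  induction h1 with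
  | bot => rw [lm_bot_mul]; exact .bot
  | @of t s1 hs1 hle =>
    induction h2 with
    | bot => rw [lm_mul_bot]; exact .bot
    | @of t' s2 hs2 hle' =>
      obtain ⟨s, hs, hle''⟩ := hS s1 hs1 s2 hs2
      exact .of hs ((lm_mul_le_mul hle hle').trans hle'')
    | sup _ _ ih1 ih2 => rw [lm_mul_sup]; exact ih1.sup ih2
  | sup _ _ ih1 ih2 => rw [lm_sup_mul]; exact ih1.sup ih2

section Main

variable {X Y A : Type*} [Fintype A] {φY : Y → L} {δ : A → X ⊕ Y → A → L}

/-- Shortening of successful `Y`-paths: any successful `Y`-path can be replaced by one of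
length at most `|A|` with a larger scalar product. -/
lemma shorten (hδ : ∀ a z b, Crisp (δ a z b)) :
    ∀ (n : ℕ) (y : List Y) (a b : A), y.length ≤ n →
      dstar δ a (y.map Sum.inr) b = 1 →
      ∃ y' : List Y, y'.length ≤ Fintype.card A ∧
        dstar δ a (y'.map Sum.inr) b = 1 ∧ (y.map φY).prod ≤ (y'.map φY).prod := by
  intro n
  induction n with
  | zero =>
    intro y a b hlen h
    exact ⟨y, by omega, h, le_rfl⟩
  | succ n ih =>
    intro y a b hlen h
    by_cases hc : y.length ≤ Fintype.card A
    · exact ⟨y, hc, h, le_rfl⟩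
    · push_neg at hc
      have hsplit : ∀ k : Fin (Fintype.card A + 1),
          ∃ c, dstar δ a ((y.take k).map Sum.inr) c = 1 ∧
            dstar δ c ((y.drop k).map Sum.inr) b = 1 := by
        intro k
        have heq : ((y.take k).map Sum.inr : List (X ⊕ Y)) ++ (y.drop k).map Sum.inr
            = y.map Sum.inr := by
          rw [← List.map_append, List.take_append_drop]
        exact dstar_split hδ (by rw [heq]; exact h)
      choose f hf1 hf2 using hsplit
      have hcard : Fintype.card A < Fintype.card (Fin (Fintype.card A + 1)) := by simp
      obtain ⟨i, j, hne, hij⟩ := Fintype.exists_ne_map_eq_of_card_lt f hcard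
      have key : ∀ i j : Fin (Fintype.card A + 1), (i : ℕ) < (j : ℕ) → f i = f j →
          ∃ y' : List Y, y'.length ≤ Fintype.card A ∧
            dstar δ a (y'.map Sum.inr) b = 1 ∧ (y.map φY).prod ≤ (y'.map φY).prod := by
        intro i j hlt hfij
        set y' : List Y := y.take i ++ y.drop j with hy'
        have hjy : (j : ℕ) ≤ y.length := by
          have := j.isLt; omega
        have hlen' : y'.length ≤ n := by
          have hti : (y.take (i : ℕ)).length = i := by
            rw [List.length_take]; omega
          have : y'.length = (i : ℕ) + (y.length - (j : ℕ)) := by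
            rw [hy', List.length_append, hti, List.length_drop]
          omega
        have hd1 : dstar δ a (y'.map Sum.inr) b = 1 := by
          apply le_antisymm (lm_le_one _)
          rw [hy', List.map_append, dstar_append]
          calc (1 : L) = dstar δ a ((y.take i).map Sum.inr) (f i) *
                dstar δ (f i) ((y.drop j).map Sum.inr) b := by
                rw [hf1 i, hfij, hf2 j, one_mul]
            _ ≤ _ := Finset.le_sup (f := fun c => dstar δ a ((y.take (i : ℕ)).map Sum.inr) c *
                dstar δ c ((y.drop (j : ℕ)).map Sum.inr) b) (Finset.mem_univ (f i))
        have hphi : (y.map φY).prod ≤ (y'.map φY).prod := by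
          have hdec : y = y.take (i : ℕ) ++ ((y.drop (i : ℕ)).take ((j : ℕ) - (i : ℕ))
              ++ y.drop (j : ℕ)) := by
            have hdd : y.drop (j : ℕ) =
                (y.drop (i : ℕ)).drop ((j : ℕ) - (i : ℕ)) := by
              rw [List.drop_drop]
              congr 1
              omega
            rw [hdd, List.take_append_drop, List.take_append_drop]
          calc (y.map φY).prod
              = ((y.take (i : ℕ)).map φY).prod *
                ((((y.drop (i : ℕ)).take ((j : ℕ) - (i : ℕ))).map φY).prod *
                  ((y.drop (j : ℕ)).map φY).prod) := by
                conv_lhs => rw [hdec]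
                rw [List.map_append, List.map_append, List.prod_append, List.prod_append]
            _ ≤ ((y.take (i : ℕ)).map φY).prod *
                (1 * ((y.drop (j : ℕ)).map φY).prod) :=
                lm_mul_le_mul le_rfl (lm_mul_le_mul (lm_le_one _) le_rfl)
            _ = (y'.map φY).prod := by
                rw [one_mul, hy', List.map_append, List.prod_append]
        obtain ⟨y'', h1, h2, h3⟩ := ih y' a b hlen' hd1
        exact ⟨y'', h1, h2, hphi.trans h3⟩
      rcases Ne.lt_or_gt hne with hlt | hlt
      · exact key i j (by exact_mod_cast hlt) hij
      · exact key j i (by exact_mod_cast hlt) hij.symm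

lemma dset_cofinal (hδ : ∀ a z b, Crisp (δ a z b)) (a : A) (x : X) (b : A) :
    ∀ s ∈ dset φY δ a x b, ∃ v ∈ UY Y [x],
      v.length ≤ 2 * Fintype.card A + 1 ∧ s ≤ phiStar φY v * dstar δ a v b := by
  rintro s ⟨v, hv, rfl⟩
  obtain ⟨y1, y2, rfl⟩ := UY_single_struct hv
  rcases crisp_dstar hδ a b (y1.map Sum.inr ++ Sum.inl x :: y2.map Sum.inr) with h1 | h1
  · -- successful path
    have hdec : (y1.map Sum.inr ++ Sum.inl x :: y2.map Sum.inr : List (X ⊕ Y)) =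
        y1.map Sum.inr ++ ([Sum.inl x] ++ y2.map Sum.inr) := by simp
    obtain ⟨c, hc1, hc2⟩ := dstar_split hδ
      (v := y1.map Sum.inr) (w := [Sum.inl x] ++ y2.map Sum.inr)
      (by rw [← hdec]; exact h1)
    obtain ⟨d, hd1, hd2⟩ := dstar_split hδ hc2
    rw [dstar_single] at hd1
    obtain ⟨y1', hl1, hs1, hp1⟩ := shorten hδ y1.length y1 a c le_rfl hc1
    obtain ⟨y2', hl2, hs2, hp2⟩ := shorten hδ y2.length y2 d b le_rfl hd2
    refine ⟨y1'.map Sum.inr ++ Sum.inl x :: y2'.map Sum.inr, UY_single_mem x y1' y2',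
      ?_, ?_⟩
    · simp only [List.length_append, List.length_cons, List.length_map]
      omega
    · have hd' : dstar δ a (y1'.map Sum.inr ++ Sum.inl x :: y2'.map Sum.inr) b = 1 := by
        apply le_antisymm (lm_le_one _)
        have hdec' : (y1'.map Sum.inr ++ Sum.inl x :: y2'.map Sum.inr : List (X ⊕ Y)) =
            y1'.map Sum.inr ++ ([Sum.inl x] ++ y2'.map Sum.inr) := by simp
        rw [hdec', dstar_append]
        have hstep : (1 : L) ≤ dstar δ c ([Sum.inl x] ++ y2'.map Sum.inr) b := by
          rw [dstar_append]
          calc (1 : L) = dstar δ c [Sum.inl x] d *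
                dstar δ d (y2'.map Sum.inr) b := by
                rw [dstar_single, hd1, hs2, one_mul]
            _ ≤ _ := Finset.le_sup (f := fun e => dstar δ c [Sum.inl x] e *
                dstar δ e (y2'.map Sum.inr) b) (Finset.mem_univ d)
        calc (1 : L) = 1 * 1 := (one_mul 1).symm
          _ ≤ dstar δ a (y1'.map Sum.inr) c *
              dstar δ c ([Sum.inl x] ++ y2'.map Sum.inr) b := by
              rw [hs1]; exact lm_mul_le_mul le_rfl hstep
          _ ≤ _ := Finset.le_sup (f := fun e => dstar δ a (y1'.map Sum.inr) e *
              dstar δ e ([Sum.inl x] ++ y2'.map Sum.inr) b) (Finset.mem_univ c)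
      rw [h1, mul_one, hd', mul_one, phiStar_decomp, phiStar_decomp]
      exact lm_mul_le_mul hp1 hp2
  · rw [h1, lm_mul_bot]
    refine ⟨[Sum.inl x], ?_, by simp, bot_le⟩
    have := UY_single_mem (Y := Y) x [] []
    simpa using this

lemma good_dset [Finite X] [Finite Y] (hδ : ∀ a z b, Crisp (δ a z b))
    (a : A) (x : X) (b : A) {e : L} (h : IsLUB (dset φY δ a x b) e) :
    e ∈ upperBounds (dset φY δ a x b) ∧ DomSup (dset φY δ a x b) e := by
  classical
  have hfin : {v : List (X ⊕ Y) | v ∈ UY Y [x] ∧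
      v.length ≤ 2 * Fintype.card A + 1}.Finite :=
    (List.finite_length_le (X ⊕ Y) (2 * Fintype.card A + 1)).subset fun v hv => hv.2
  set F := hfin.toFinset with hF
  have hub : F.sup (fun v => phiStar φY v * dstar δ a v b) ∈
      upperBounds (dset φY δ a x b) := by
    intro s hs
    obtain ⟨v, hv1, hv2, hv3⟩ := dset_cofinal hδ a x b s hs
    refine hv3.trans (Finset.le_sup (f := fun v => phiStar φY v * dstar δ a v b) ?_)
    rw [hF, Set.Finite.mem_toFinset]
    exact ⟨hv1, hv2⟩
  have hle : F.sup (fun v => phiStar φY v * dstar δ a v b) ≤ e := by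
    apply Finset.sup_le
    intro v hv
    rw [hF, Set.Finite.mem_toFinset] at hv
    exact h.1 ⟨v, hv.1, rfl⟩
  have heq : e = F.sup (fun v => phiStar φY v * dstar δ a v b) :=
    le_antisymm (h.2 hub) hle
  refine ⟨h.1, ?_⟩
  rw [heq]
  apply DomSup.finsetSup
  intro v hv
  rw [hF, Set.Finite.mem_toFinset] at hv
  exact DomSup.of (⟨v, hv.1, rfl⟩ : _ ∈ dset φY δ a x b) le_rfl

end Main

end Aux

open Fz in
/-- Let `L` be an integral ℓ-monoid, `α` a fuzzy regular expression over
a finite alphabet `X` with associated alphabet `Y`, `A = (A, X∪Y, δ, a₀, τ)` an arbitrary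
nondeterministic finite automaton recognizing `‖α_R‖`, and `A_α` the fuzzy automaton
associated with `A` and `α`.  Then for every nonempty word `u ∈ X⁺` and all states
`a, b ∈ A`, the set `{φ*_α(v) ⊗ δ(a,v,b) : v ∈ U_Y(u)}` has a least upper bound in `L`
and `δ^{A_α}(a, u, b) = ⋁_{v ∈ U_Y(u)} φ*_α(v) ⊗ δ(a,v,b)`, where `δ^{A_α}` on the left
is the extension of the fuzzy transition relation of `A_α` to words. -/
theorem stmt19 {L X Y A : Type*} [IntegralLMonoid L] [Fintype X] [Fintype Y] [Fintype A]
    (α : FRE X L) (sc : L → Y) (φY : Y → L)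
    (hsc : Set.BijOn sc α.scalars (Set.univ : Set Y))
    (hφY : ∀ l ∈ α.scalars, φY (sc l) = l)
    (δ : A → X ⊕ Y → A → L) (a0 : A) (τ : A → L)
    (hδ : ∀ a z b, δ a z b = 1 ∨ δ a z b = ⊥)
    (hτ : ∀ a, τ a = 1 ∨ τ a = ⊥)
    (hrec : ∀ v : List (X ⊕ Y), lang δ a0 τ v = langR sc α v)
    (δα : A → X → A → L) (τα : A → L)
    (hδα : ∀ (a : A) (x : X) (b : A), IsLUB (dset φY δ a x b) (δα a x b))
    (hτα : ∀ a : A, IsLUB (tset φY δ τ a) (τα a)) :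
    ∀ u : List X, u ≠ [] → ∀ a b : A,
      IsLUB {l | ∃ v ∈ UY Y u, l = phiStar φY v * dstar δ a v b} (dstar δα a u b) := by
  have hδc : ∀ a z b, Crisp (δ a z b) := hδ
  suffices H : ∀ u : List X, u ≠ [] → ∀ a b : A,
      dstar δα a u b ∈
        upperBounds {l | ∃ v ∈ UY Y u, l = phiStar φY v * dstar δ a v b} ∧
      DomSup {l | ∃ v ∈ UY Y u, l = phiStar φY v * dstar δ a v b} (dstar δα a u b) by
    intro u hu a b
    exact isLUB_of_domSup (H u hu a b).1 (H u hu a b).2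
  intro u
  induction u with
  | nil => intro h; exact absurd rfl h
  | cons x u' ih =>
    intro _ a b
    rcases eq_or_ne u' [] with rfl | hu'
    · -- single letter
      rw [dstar_single]
      exact good_dset hδc a x b (hδα a x b)
    · -- inductive step
      have hd : dstar δα a (x :: u') b =
          Finset.univ.sup fun c => δα a x c * dstar δα c u' b := by
        have hsplit : (x :: u') = [x] ++ u' := rfl
        rw [hsplit, dstar_append]
        simp_rw [dstar_single]
      rw [hd]
      constructor
      · -- upper bound
        rintro s ⟨v, hv, rfl⟩
        obtain ⟨v1, v2, rfl, hv1, hv2⟩ := UY_cons_decomp hv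
        rw [dstar_append, phiStar_append, lm_mul_finsetSup]
        apply Finset.sup_le
        intro c _
        refine le_trans ?_ (Finset.le_sup (f := fun c => δα a x c * dstar δα c u' b)
          (Finset.mem_univ c))
        have hkey : phiStar φY v1 * phiStar φY v2 * (dstar δ a v1 c * dstar δ c v2 b)
            ≤ (phiStar φY v1 * dstar δ a v1 c) * (phiStar φY v2 * dstar δ c v2 b) := by
          rcases crisp_dstar hδc a c v1 with h | h <;> rw [h]
          · rw [one_mul, mul_one, mul_assoc]
          · rw [lm_bot_mul, lm_mul_bot]
            exact bot_le
        refine hkey.trans (lm_mul_le_mul ?_ ?_)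
        · exact (hδα a x c).1 ⟨v1, hv1, rfl⟩
        · exact (ih hu' c b).1 ⟨v2, hv2, rfl⟩
      · -- dominated sup
        apply DomSup.finsetSup
        intro c _
        apply DomSup.mul (good_dset hδc a x c (hδα a x c)).2 (ih hu' c b).2
        rintro s1 ⟨v1, hv1, rfl⟩ s2 ⟨v2, hv2, rfl⟩
        refine ⟨phiStar φY (v1 ++ v2) * dstar δ a (v1 ++ v2) b,
          ⟨v1 ++ v2, UY_append hv1 hv2, rfl⟩, ?_⟩
        rw [phiStar_append]
        rcases crisp_dstar hδc a c v1 with h | h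
        · rw [h, mul_one, mul_assoc]
          refine lm_mul_le_mul le_rfl (lm_mul_le_mul le_rfl ?_)
          calc dstar δ c v2 b = dstar δ a v1 c * dstar δ c v2 b := by rw [h, one_mul]
            _ ≤ dstar δ a (v1 ++ v2) b := by
                rw [dstar_append]
                exact Finset.le_sup (f := fun e => dstar δ a v1 e * dstar δ e v2 b)
                  (Finset.mem_univ c)
        · rw [h, lm_mul_bot, lm_bot_mul]
          exact bot_le
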